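/- arXiv:0901.2778 — 6 statements merged into one kernel-verified Lean document; each statement's English description precedes it below -/
import Mathlib

section
/- With K, A, Λ, the basis b_1,…,b_N, the dual family b*_1,…,b*_N, and the generalized Jacobian J := Σ_{i=1}^N b_i·b*_i as in the context: for every h ∈ A, Tr(h) = Λ(h·J). Equivalently, the trace functional on A equals J·Λ. -/
theorem statement7 {K : Type*} [Field K] {A : Type*} [CommRing A] [Algebra K A]
    [FiniteDimensional K A] {N : ℕ} (hN : Module.finrank K A = N)
    (b : Module.Basis (Fin N) K A) (Λ : A →ₗ[K] K) (bs : Fin N → A)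
    (hdual : ∀ i j, Λ (b i * bs j) = if i = j then 1 else 0)
    (J : A) (hJ : J = ∑ i, b i * bs i) :
    ∀ h : A, LinearMap.trace K A (LinearMap.mulLeft K h) = Λ (h * J) := by
  have key : ∀ (a : A) (j : Fin N), Λ (a * bs j) = b.repr a j := by
    intro a j
    conv_lhs => rw [← b.sum_repr a]
    rw [Finset.sum_mul, map_sum]
    simp only [smul_mul_assoc, map_smul, hdual, smul_eq_mul, mul_ite, mul_one, mul_zero]
    simp [Finset.sum_ite_eq']
  intro h
  rw [LinearMap.trace_eq_matrix_trace K b, Matrix.trace, hJ, Finset.mul_sum, map_sum]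
  apply Finset.sum_congr rfl
  intro i _
  rw [Matrix.diag_apply, LinearMap.toMatrix_apply, LinearMap.mulLeft_apply,
    ← mul_assoc, key]
end

section
/- With K, A, Λ, the basis b_1,…,b_N, the dual family b*_1,…,b*_N, and J := Σ_{i=1}^N b_i·b*_i as in the context: let M_J be the N×N matrix whose (i,j) entry is the coefficient of b_j in the expansion of J·b_i in the basis b_1,…,b_N (i.e., M_J is the transpose of the matrix of the multiplication-by-J endomorphism in this basis), let 𝔐 be the N×N moment matrix with (i,j) entry Λ(b_i·b_j), and let T be the N×N matrix of traces with (i,j) entry Tr(b_i·b_j). Then M_J · 𝔐 = T. -/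
theorem statement8 {K : Type*} [Field K] {A : Type*} [CommRing A] [Algebra K A]
    [FiniteDimensional K A] {N : ℕ} (hN : Module.finrank K A = N)
    (b : Module.Basis (Fin N) K A) (Λ : A →ₗ[K] K) (bs : Fin N → A)
    (hdual : ∀ i j, Λ (b i * bs j) = if i = j then 1 else 0)
    (J : A) (hJ : J = ∑ i, b i * bs i)
    (MJ : Matrix (Fin N) (Fin N) K) (hMJ : ∀ i j, MJ i j = b.repr (J * b i) j)
    (G : Matrix (Fin N) (Fin N) K) (hG : ∀ i j, G i j = Λ (b i * b j))
    (T : Matrix (Fin N) (Fin N) K)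
    (hT : ∀ i j, T i j = LinearMap.trace K A (LinearMap.mulLeft K (b i * b j))) :
    MJ * G = T := by
  have hrepr : ∀ (a : A) (j : Fin N), Λ (a * bs j) = b.repr a j := by
    intro a j
    conv_lhs => rw [← b.sum_repr a]
    rw [Finset.sum_mul, map_sum]
    have : ∀ k, Λ (b.repr a k • (b k * bs j)) = b.repr a k * (if k = j then 1 else 0) := by
      intro k; rw [map_smul, hdual]; simp
    simp only [smul_mul_assoc, this]
    simp
  ext i j
  rw [Matrix.mul_apply]
  simp only [hMJ, hG]
  have hL : ∑ k, b.repr (J * b i) k * Λ (b k * b j) = Λ (J * b i * b j) := by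
    conv_rhs => rw [← b.sum_repr (J * b i)]
    rw [Finset.sum_mul, map_sum]
    simp [smul_mul_assoc]
  rw [hL, hT, LinearMap.trace_eq_matrix_trace K b, Matrix.trace]
  simp only [Matrix.diag, LinearMap.toMatrix_apply, LinearMap.mulLeft_apply]
  simp only [← hrepr, ← map_sum]
  congr 1
  rw [hJ, Finset.sum_mul, Finset.sum_mul]
  exact Finset.sum_congr rfl fun k _ => by ring
end

section
/- With K, A, Λ, the basis b_1,…,b_N, the dual family b*_1,…,b*_N, and J := Σ_{i=1}^N b_i·b*_i as in the context: for all i, j ∈ {1,…,N}, the coefficient of b_j in the expansion of J·b_i in the basis b_1,…,b_N equals Tr(b_i·b*_j). That is, the transpose of the matrix of the multiplication-by-J endomorphism in the basis b_1,…,b_N is the matrix [Tr(b_i·b*_j)]_{i,j}. -/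
theorem statement9 {K : Type*} [Field K] {A : Type*} [CommRing A] [Algebra K A]
    [FiniteDimensional K A] {N : ℕ} (hN : Module.finrank K A = N)
    (b : Module.Basis (Fin N) K A) (Λ : A →ₗ[K] K) (bs : Fin N → A)
    (hdual : ∀ i j, Λ (b i * bs j) = if i = j then 1 else 0)
    (J : A) (hJ : J = ∑ i, b i * bs i) :
    ∀ i j : Fin N,
      b.repr (J * b i) j = LinearMap.trace K A (LinearMap.mulLeft K (b i * bs j)) := by
  have key : ∀ (a : A) (j : Fin N), b.repr a j = Λ (a * bs j) := by
    intro a j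
    conv_rhs => rw [← b.sum_repr a]
    rw [Finset.sum_mul, map_sum]
    have : ∀ k ∈ Finset.univ, Λ (b.repr a k • b k * bs j)
        = if k = j then b.repr a k else 0 := by
      intro k _
      rw [smul_mul_assoc, map_smul, hdual, smul_eq_mul]
      split <;> simp
    rw [Finset.sum_congr rfl this, Finset.sum_ite_eq' Finset.univ j]
    simp
  intro i j
  rw [LinearMap.trace_eq_matrix_trace K b, Matrix.trace]
  have hdiag : ∀ k, (LinearMap.toMatrix b b (LinearMap.mulLeft K (b i * bs j))).diag k
      = Λ (b i * bs j * b k * bs k) := by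
    intro k
    rw [Matrix.diag, LinearMap.toMatrix_apply, LinearMap.mulLeft_apply, key]
  rw [Finset.sum_congr rfl (fun k _ => hdiag k), key, hJ, Finset.sum_mul, Finset.sum_mul,
    map_sum]
  exact Finset.sum_congr rfl (fun k _ => by ring_nf)
end

section
/- Let K be an algebraically closed field and A a finite-dimensional commutative unital K-algebra. Let Λ : A → K be a K-linear functional such that the bilinear form (a,b) ↦ Λ(a·b) has maximal rank among all K-linear functionals on A, i.e., dim_K(A/R(Λ')) ≤ dim_K(A/R(Λ)) for every K-linear functional Λ' : A → K. Then R(Λ) ⊆ Rad(A), where Rad(A) denotes the nilradical (equivalently, the Jacobson radical) of A. -/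
/-- `R(Λ) = {a ∈ A : Λ(a·b) = 0 for all b}`, as an ideal of `A`. -/
def RIdeal {K A : Type*} [Field K] [CommRing A] [Algebra K A]
    (Λ : A →ₗ[K] K) : Ideal A where
  carrier := { a : A | ∀ b : A, Λ (a * b) = 0 }
  zero_mem' := by intro b; simp
  add_mem' := by
    intro x y hx hy b
    have : (x + y) * b = x * b + y * b := by ring
    rw [this, map_add, hx b, hy b, add_zero]
  smul_mem' := by
    intro c a ha b
    have : c • a * b = a * (c * b) := by
      rw [smul_eq_mul]; ring
    rw [this]; exact ha (c * b)

theorem statement14 {K A : Type*} [Field K] [IsAlgClosed K] [CommRing A] [Algebra K A]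
    [FiniteDimensional K A] (Λ : A →ₗ[K] K)
    (hmax : ∀ Λ' : A →ₗ[K] K,
      Module.finrank K (A ⧸ RIdeal Λ') ≤ Module.finrank K (A ⧸ RIdeal Λ)) :
    RIdeal Λ ≤ nilradical A := by
  intro a ha
  by_contra hn
  -- `ha : a ∈ RIdeal Λ`, i.e. `∀ b, Λ (a * b) = 0`
  have haΛ : ∀ b : A, Λ (a * b) = 0 := ha
  -- find a prime `p` with `a ∉ p`
  rw [nilradical_eq_sInf, Submodule.mem_sInf] at hn
  push_neg at hn
  obtain ⟨p, hp, hap⟩ := hn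
  haveI : Ideal.IsPrime p := hp
  -- the quotient `A ⧸ p` is a finite-dimensional domain over the algebraically closed `K`,
  -- so the structure map `K → A ⧸ p` is bijective
  haveI : FiniteDimensional K (A ⧸ p) := Module.Finite.of_surjective
    (Ideal.Quotient.mkₐ K p).toLinearMap (Ideal.Quotient.mk_surjective)
  haveI : Algebra.IsIntegral K (A ⧸ p) := Algebra.IsIntegral.of_finite K (A ⧸ p)
  have hbij : Function.Bijective (algebraMap K (A ⧸ p)) :=
    ⟨(algebraMap K (A ⧸ p)).injective,
      IsAlgClosed.algebraMap_bijective_of_isIntegral.2⟩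
  -- the resulting algebra homomorphism `φ : A → K`
  let ψ : (A ⧸ p) ≃ₐ[K] K := (AlgEquiv.ofBijective (Algebra.ofId K (A ⧸ p)) hbij).symm
  let φ : A →ₐ[K] K := ψ.toAlgHom.comp (Ideal.Quotient.mkₐ K p)
  have hφa : φ a ≠ 0 := by
    intro h0
    apply hap
    have : (Ideal.Quotient.mk p) a = 0 := by
      have := congrArg ψ.symm h0
      simpa [φ] using this
    rwa [Ideal.Quotient.eq_zero_iff_mem] at this
  -- the perturbed functional
  set Λ' : A →ₗ[K] K := Λ + φ.toLinearMap with hΛ'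
  have hΛ'app : ∀ z : A, Λ' z = Λ z + φ z := fun z => rfl
  -- `RIdeal Λ' < RIdeal Λ`
  have hsub : RIdeal Λ' ≤ RIdeal Λ := by
    intro x hx
    have hx' : ∀ b : A, Λ (x * b) + φ x * φ b = 0 := by
      intro b
      have := hx b
      rw [hΛ'app] at this
      simpa [map_mul] using this
    have hφx : φ x = 0 := by
      have h1 := hx' a
      have : x * a = a * x := mul_comm x a
      rw [this, haΛ x, zero_add] at h1
      rcases mul_eq_zero.mp h1 with h | h
      · exact h
      · exact absurd h hφa
    intro b
    have := hx' b
    rwa [hφx, zero_mul, add_zero] at this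
  have hlt : RIdeal Λ' < RIdeal Λ := by
    refine lt_of_le_of_ne hsub (fun heq => ?_)
    have haΛ' : a ∈ RIdeal Λ' := heq ▸ ha
    have h0 : Λ a = 0 := by simpa using haΛ 1
    have := haΛ' 1
    rw [hΛ'app, mul_one, h0, zero_add] at this
    exact hφa this
  -- pass to `K`-submodules and compare dimensions
  have hltK : (RIdeal Λ').restrictScalars K < (RIdeal Λ).restrictScalars K := by
    constructor
    · intro x hx; exact hsub hx
    · intro hle
      exact hlt.ne (le_antisymm hsub (fun x hx => hle hx))
  have hdim : Module.finrank K ((RIdeal Λ').restrictScalars K) <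
      Module.finrank K ((RIdeal Λ).restrictScalars K) :=
    Submodule.finrank_lt_finrank_of_lt hltK
  have hq1 := ((RIdeal Λ').restrictScalars K).finrank_quotient_add_finrank
  have hq2 := ((RIdeal Λ).restrictScalars K).finrank_quotient_add_finrank
  have he1 : Module.finrank K (A ⧸ (RIdeal Λ').restrictScalars K) =
      Module.finrank K (A ⧸ RIdeal Λ') :=
    LinearEquiv.finrank_eq (Submodule.Quotient.restrictScalarsEquiv K (RIdeal Λ'))
  have he2 : Module.finrank K (A ⧸ (RIdeal Λ).restrictScalars K) =
      Module.finrank K (A ⧸ RIdeal Λ) :=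
    LinearEquiv.finrank_eq (Submodule.Quotient.restrictScalarsEquiv K (RIdeal Λ))
  have hmax' := hmax Λ'
  omega
end

section
/- Let K be a field, A a finite-dimensional commutative unital K-algebra, and N an ideal of A contained in the nilradical of A. Let b_1,…,b_n be a K-basis of A and S ⊆ {1,…,n} a subset such that the images of the elements b_i, i ∈ S, in A/N form a K-basis of A/N. Let T be the n×n matrix of traces with entries T_{ij} = Tr(b_i·b_j). Then the rank of the submatrix (T_{ij})_{i,j ∈ S} equals the rank of T. -/
theorem statement16 {K A : Type*} [Field K] [CommRing A] [Algebra K A]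
    [FiniteDimensional K A] {n : ℕ} (b : Module.Basis (Fin n) K A)
    (N : Ideal A) (hN : N ≤ nilradical A)
    (S : Finset (Fin n))
    (hind : LinearIndependent K (fun i : S => Ideal.Quotient.mk N (b i)))
    (hspan : Submodule.span K (Set.range fun i : S => Ideal.Quotient.mk N (b i)) = ⊤)
    (T : Matrix (Fin n) (Fin n) K)
    (hT : ∀ i j, T i j = LinearMap.trace K A (LinearMap.mulLeft K (b i * b j))) :
    (T.submatrix (fun i : S => (i : Fin n)) (fun j : S => (j : Fin n))).rank = T.rank := by
  classical
  set f : A →ₗ[K] K := (LinearMap.trace K A).comp (LinearMap.mul K A) with hfdef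
  have hfapp : ∀ x : A, f x = LinearMap.trace K A (LinearMap.mulLeft K x) := by
    intro x
    have : LinearMap.mul K A x = LinearMap.mulLeft K x := by
      ext y; simp
    simp [hfdef, this]
  have hf0 : ∀ x ∈ N, f x = 0 := by
    intro x hx
    obtain ⟨k, hk⟩ := hN hx
    have hnil : IsNilpotent (LinearMap.mulLeft K x) :=
      ⟨k, by rw [LinearMap.pow_mulLeft, hk, LinearMap.mulLeft_zero_eq_zero]⟩
    have h := LinearMap.isNilpotent_trace_of_isNilpotent hnil
    rw [hfapp]
    exact isNilpotent_iff_eq_zero.mp h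
  have hTf : ∀ i j, T i j = f (b i * b j) := by
    intro i j; rw [hfapp, hT]
  -- basis of the quotient
  let q : Module.Basis S K (A ⧸ N) := Module.Basis.mk hind hspan.ge
  have hq : ∀ i : S, q i = Ideal.Quotient.mk N (b i) := fun i => Module.Basis.mk_apply _ _ i
  let c : Fin n → S → K := fun j i => q.repr (Ideal.Quotient.mk N (b j)) i
  let r : Fin n → A := fun j => ∑ i : S, c j i • b (i : Fin n)
  have hmk : ∀ x : A, Ideal.Quotient.mk N x = Ideal.Quotient.mkₐ K N x := fun x => rfl
  have hr : ∀ j, b j - r j ∈ N := by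
    intro j
    have h1 : Ideal.Quotient.mk N (b j) = Ideal.Quotient.mk N (r j) := by
      conv_lhs => rw [← q.sum_repr (Ideal.Quotient.mk N (b j))]
      simp only [r, c, hmk, map_sum, map_smul, hq]
    rwa [Ideal.Quotient.eq] at h1
  have key : ∀ j k, f (b j * b k) = f (r j * r k) := by
    intro j k
    have hmem : b j * b k - r j * r k ∈ N := by
      have h2 : b j * b k - r j * r k = (b j - r j) * b k + r j * (b k - r k) := by ring
      rw [h2]
      exact N.add_mem (N.mul_mem_right _ (hr j)) (N.mul_mem_left _ (hr k))
    have h3 := hf0 _ hmem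
    rw [map_sub] at h3
    exact sub_eq_zero.mp h3
  -- matrices
  set Ts : Matrix S S K :=
    T.submatrix (fun i : S => (i : Fin n)) (fun j : S => (j : Fin n)) with hTs
  set C : Matrix (Fin n) S K := Matrix.of fun j i => c j i with hC
  set D : Matrix S (Fin n) K := Matrix.of fun i j => if j = (i : Fin n) then 1 else 0 with hD
  have hDT : D * T * D.transpose = Ts := by
    ext i l
    simp [Matrix.mul_apply, Matrix.transpose_apply, hD, hTs, Finset.sum_mul,
      Finset.mul_sum]
  have hCT : C * Ts * C.transpose = T := by
    ext j k
    have expand : f (r j * r k) = ∑ i : S, ∑ l : S, c j i * c k l * T (i : Fin n) (l : Fin n) := by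
      have : r j * r k = ∑ i : S, ∑ l : S, (c j i * c k l) • (b (i : Fin n) * b (l : Fin n)) := by
        simp only [r, Finset.sum_mul, Finset.mul_sum, smul_mul_assoc, mul_smul_comm,
          Finset.smul_sum, smul_smul]
        rw [Finset.sum_comm]
        exact Finset.sum_congr rfl fun i _ => Finset.sum_congr rfl fun l _ => by
          rw [mul_comm (c k l) (c j i)]
      rw [this, map_sum]
      refine Finset.sum_congr rfl fun i _ => ?_
      rw [map_sum]
      refine Finset.sum_congr rfl fun l _ => ?_
      rw [map_smul, smul_eq_mul, hTf]
    have hTjk : T j k = ∑ i : S, ∑ l : S, c j i * c k l * T (i : Fin n) (l : Fin n) := by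
      rw [hTf, key, expand]
    rw [hTjk]
    simp only [Matrix.mul_apply, Matrix.transpose_apply, hC, hTs, Matrix.of_apply,
      Matrix.submatrix_apply, Finset.sum_mul, Finset.mul_sum]
    rw [Finset.sum_comm]
    refine Finset.sum_congr rfl fun i _ => Finset.sum_congr rfl fun l _ => by ring
  refine le_antisymm ?_ ?_
  · calc Ts.rank = (D * T * D.transpose).rank := by rw [hDT]
    _ ≤ (D * T).rank := Matrix.rank_mul_le_left _ _
    _ ≤ T.rank := Matrix.rank_mul_le_right _ _
  · calc T.rank = (C * Ts * C.transpose).rank := by rw [hCT]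
    _ ≤ (C * Ts).rank := Matrix.rank_mul_le_left _ _
    _ ≤ Ts.rank := Matrix.rank_mul_le_right _ _
end

section
/- Let K be a field and f ∈ K[x] of degree d ≥ 1 with coefficients a_0,…,a_d (a_d ≠ 0). Let c_{ij} (0 ≤ i,j ≤ d−1) be the coefficients determined by the identity f(x)f'(y) − f(y)f'(x) = (x−y)·Σ_{i,j=0}^{d−1} c_{ij} x^i y^j in K[x,y]. Then for all 0 ≤ i,j ≤ d−1, c_{ij} = Tr(H_i·H_j); that is, the Bezout matrix B_{f,f'} of f and its derivative f' equals the matrix of traces of f with respect to the Horner basis H_0,…,H_{d−1}. -/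
open Polynomial

namespace S17

variable {K : Type*} [Field K]

/-- The Horner polynomials of `f`. -/
noncomputable def HH (f : K[X]) (i : ℕ) : K[X] :=
  ∑ t ∈ Finset.range (f.natDegree - i), C (f.coeff (i + 1 + t)) * X ^ t

lemma HH_zero (f : K[X]) {i : ℕ} (h : f.natDegree ≤ i) : HH f i = 0 := by
  unfold HH; rw [Nat.sub_eq_zero_of_le h]; simp

lemma HH_rec (f : K[X]) (m : ℕ) : HH f m = C (f.coeff (m + 1)) + X * HH f (m + 1) := by
  unfold HH
  rcases e : f.natDegree - m with _ | n
  · have h1 : f.natDegree ≤ m := by omega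
    have h2 : f.natDegree - (m + 1) = 0 := by omega
    rw [h2]
    simp [coeff_eq_zero_of_natDegree_lt (by omega : f.natDegree < m + 1)]
  · have h2 : f.natDegree - (m + 1) = n := by omega
    rw [h2, Finset.sum_range_succ']
    rw [Finset.mul_sum]
    simp only [pow_succ, pow_zero, one_mul]
    rw [add_comm]
    congr 1
    · simp
    · apply Finset.sum_congr rfl
      intro s _
      have : m + 1 + (s + 1) = m + 1 + 1 + s := by omega
      rw [this]; ring

lemma f_eq (f : K[X]) : f = C (f.coeff 0) + X * HH f 0 := by
  conv_lhs => rw [f.as_sum_range_C_mul_X_pow]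
  rw [Finset.sum_range_succ']
  unfold HH
  rw [Finset.mul_sum]
  simp only [Nat.sub_zero, pow_zero, mul_one]
  rw [add_comm]
  congr 1
  apply Finset.sum_congr rfl
  intro s _
  have : 0 + 1 + s = s + 1 := by omega
  rw [this]; ring

lemma X_pow_mul_HH (f : K[X]) (i : ℕ) :
    X ^ (i + 1) * HH f i = f - ∑ t ∈ Finset.range (i + 1), C (f.coeff t) * X ^ t := by
  induction i with
  | zero =>
    simp only [zero_add, pow_one, Finset.sum_range_one, pow_zero, mul_one]
    linear_combination -f_eq f
  | succ n ih =>
    have hrec := HH_rec f n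
    have : X ^ (n + 1 + 1) * HH f (n + 1) = X ^ (n + 1) * (X * HH f (n + 1)) := by ring
    rw [this]
    have hx : X * HH f (n + 1) = HH f n - C (f.coeff (n + 1)) := by linear_combination -hrec
    rw [hx, mul_sub, ih]
    conv_rhs => rw [Finset.sum_range_succ]
    ring

lemma coeff_sum_C {A : Type*} [CommRing A] (n : ℕ) (u : ℕ → A) (j : ℕ) :
    (∑ t ∈ Finset.range n, C (u t) * X ^ t).coeff j = if j < n then u j else 0 := by
  rw [finset_sum_coeff]
  simp only [coeff_C_mul, coeff_X_pow, mul_ite, mul_one, mul_zero]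
  rw [Finset.sum_ite_eq (Finset.range n) j u]
  simp [Finset.mem_range]

lemma coeff_sum_fin {A : Type*} [CommRing A] (n : ℕ) (v : Fin n → A) (j : Fin n) :
    (∑ t : Fin n, C (v t) * X ^ (t : ℕ)).coeff (j : ℕ) = v j := by
  rw [finset_sum_coeff]
  simp only [coeff_C_mul, coeff_X_pow, mul_ite, mul_one, mul_zero]
  have : ∀ t : Fin n, ((j : ℕ) = (t : ℕ)) = (j = t) := fun t => by
    simp [Fin.ext_iff]
  simp only [this]
  rw [Finset.sum_ite_eq Finset.univ j v]
  simp

/-- The fundamental identity `f(y) - f(x) = (y - x) · ∑ H_t(x) y^t` in `K[x][y]`. -/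
lemma L1 (f : K[X]) :
    f.map C - C f = (X - C X) * ∑ t ∈ Finset.range f.natDegree, C (HH f t) * X ^ t := by
  have hS : ∀ m : ℕ, (∑ t ∈ Finset.range f.natDegree, C (HH f t) * X ^ t).coeff m = HH f m := by
    intro m
    rw [coeff_sum_C]
    split_ifs with h
    · rfl
    · exact (HH_zero f (by omega)).symm
  apply Polynomial.ext
  intro n
  rw [sub_mul]
  cases n with
  | zero =>
    rw [coeff_sub, coeff_sub, coeff_map, coeff_C]
    rw [mul_coeff_zero]
    simp only [coeff_X_zero, zero_mul, if_pos rfl, if_true]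
    rw [coeff_C_mul, hS]
    linear_combination -(f_eq f)
  | succ m =>
    rw [coeff_sub, coeff_sub, coeff_map, coeff_C]
    rw [if_neg (Nat.succ_ne_zero m), coeff_X_mul, coeff_C_mul, hS, hS]
    linear_combination -(HH_rec f m)

/-- `f' = ∑ H_t · x^t`. -/
lemma L3 (f : K[X]) : derivative f = ∑ t ∈ Finset.range f.natDegree, HH f t * X ^ t := by
  have h := congrArg derivative (L1 f)
  rw [derivative_sub, derivative_map, derivative_C, sub_zero, derivative_mul,
    derivative_sub, derivative_X, derivative_C, sub_zero] at h
  have h2 := congrArg (Polynomial.eval (Polynomial.X : K[X])) h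
  rw [eval_map, eval₂_C_X] at h2
  rw [h2]
  simp only [eval_add, eval_mul, eval_sub, eval_X, eval_C, eval_one, sub_self, zero_mul,
    add_zero, one_mul, eval_finset_sum, eval_pow]

/-- The power basis of `AdjoinRoot f`, indexed by `Fin f.natDegree`. -/
noncomputable def pb (f : K[X]) (hf : f ≠ 0) : Module.Basis (Fin f.natDegree) K (AdjoinRoot f) :=
  (AdjoinRoot.powerBasis hf).basis

lemma basis_pow (f : K[X]) (hf : f ≠ 0) (k : Fin f.natDegree) :
    (pb f hf) k
      = AdjoinRoot.root f ^ (k : ℕ) := by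
  exact (AdjoinRoot.powerBasis hf).basis_eq_pow k

lemma repr_root_pow (f : K[X]) (hf : f ≠ 0) (e : ℕ) (he : e < f.natDegree)
    (m : Fin f.natDegree) :
    (pb f hf).repr
      (AdjoinRoot.root f ^ e) m = if (m : ℕ) = e then 1 else 0 := by
  have h1 : AdjoinRoot.root f ^ e = pb f hf ⟨e, he⟩ := by
    exact ((AdjoinRoot.powerBasis hf).basis_eq_pow ⟨e, he⟩).symm
  rw [h1, Module.Basis.repr_self, Finsupp.single_apply]
  simp [Fin.ext_iff, eq_comm]

lemma repr_mk_sum_aux (f : K[X]) (hf : f ≠ 0) (n : ℕ) (a : ℕ → K) (e : ℕ → ℕ)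
    (he : ∀ s ∈ Finset.range n, e s < f.natDegree) (m : Fin f.natDegree) :
    (pb f hf).repr
      (AdjoinRoot.mk f (∑ s ∈ Finset.range n, C (a s) * X ^ (e s))) m
      = ∑ s ∈ Finset.range n, if (m : ℕ) = e s then a s else 0 := by
  rw [map_sum, map_sum, Finsupp.finset_sum_apply]
  apply Finset.sum_congr rfl
  intro s hs
  rw [map_mul, map_pow, AdjoinRoot.mk_C, AdjoinRoot.mk_X, ← AdjoinRoot.algebraMap_eq,
    ← Algebra.smul_def, map_smul, Finsupp.smul_apply,
    repr_root_pow f hf _ (he s hs), smul_eq_mul]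
  split_ifs <;> simp

/-- Duality on basis elements: the coefficient of `x^(d-1)` in `x^k · H_i mod f`
is `a_d` if `k = i` and `0` otherwise. -/
lemma repr_mk_XpowHH (f : K[X]) (hf : f ≠ 0) (k i m : Fin f.natDegree)
    (hm : (m : ℕ) = f.natDegree - 1) :
    (pb f hf).repr
      (AdjoinRoot.mk f (X ^ (k : ℕ) * HH f i)) m
      = if k = i then f.coeff f.natDegree else 0 := by
  have hkd : (k : ℕ) < f.natDegree := k.isLt
  have hid : (i : ℕ) < f.natDegree := i.isLt
  rcases le_or_gt (k : ℕ) (i : ℕ) with hki | hik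
  · have hexp : X ^ (k : ℕ) * HH f i
        = ∑ s ∈ Finset.range (f.natDegree - (i : ℕ)),
            C (f.coeff ((i : ℕ) + 1 + s)) * X ^ (s + (k : ℕ)) := by
      unfold HH
      rw [Finset.mul_sum]
      apply Finset.sum_congr rfl
      intro s _
      rw [pow_add]; ring
    rw [hexp, repr_mk_sum_aux f hf _ _ _ (fun s hs => by
      simp only [Finset.mem_range] at hs; omega)]
    by_cases hkieq : k = i
    · subst hkieq
      rw [if_pos rfl]
      rw [Finset.sum_eq_single_of_mem (f.natDegree - 1 - (k : ℕ))]
      · rw [if_pos (by omega)]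
        congr 1
        omega
      · simp only [Finset.mem_range]; omega
      · intro s _ hs
        rw [if_neg (by omega)]
    · rw [if_neg hkieq]
      apply Finset.sum_eq_zero
      intro s hs
      simp only [Finset.mem_range] at hs
      have hlt : (k : ℕ) < (i : ℕ) := by
        rcases lt_or_eq_of_le hki with h | h
        · exact h
        · exact absurd (Fin.ext h) hkieq
      rw [if_neg (by omega)]
  · have hexp : X ^ (k : ℕ) * HH f i
        = X ^ ((k : ℕ) - 1 - (i : ℕ)) * f
          - ∑ t ∈ Finset.range ((i : ℕ) + 1),
              C (f.coeff t) * X ^ (t + ((k : ℕ) - 1 - (i : ℕ))) := by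
      have hkk : (k : ℕ) - 1 - (i : ℕ) + ((i : ℕ) + 1) = (k : ℕ) := by omega
      have h1 : X ^ (k : ℕ) * HH f i
          = X ^ ((k : ℕ) - 1 - (i : ℕ)) * (X ^ ((i : ℕ) + 1) * HH f i) := by
        rw [← mul_assoc, ← pow_add, hkk]
      rw [h1, X_pow_mul_HH, mul_sub, Finset.mul_sum]
      congr 1
      apply Finset.sum_congr rfl
      intro t _
      rw [pow_add]; ring
    rw [hexp, map_sub, map_mul, map_pow, AdjoinRoot.mk_X, AdjoinRoot.mk_self, mul_zero,
      zero_sub, map_neg, Finsupp.neg_apply,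
      repr_mk_sum_aux f hf _ _ _ (fun t ht => by
        simp only [Finset.mem_range] at ht; omega)]
    rw [if_neg (by intro h; subst h; omega)]
    rw [Finset.sum_eq_zero, neg_zero]
    intro t ht
    simp only [Finset.mem_range] at ht
    rw [if_neg (by omega)]

/-- Duality: the `(d-1)`-st coordinate of `z · H_i` is `a_d` times the `i`-th
coordinate of `z`. -/
lemma dual (f : K[X]) (hf : f ≠ 0) (i m : Fin f.natDegree)
    (hm : (m : ℕ) = f.natDegree - 1) (z : AdjoinRoot f) :
    (pb f hf).repr
      (z * AdjoinRoot.mk f (HH f i)) m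
      = f.coeff f.natDegree *
        (pb f hf).repr
          z i := by
  have key : ((pb f hf).coord m).comp
        (LinearMap.mulRight K (AdjoinRoot.mk f (HH f i)))
      = f.coeff f.natDegree • (pb f hf).coord i := by
    apply Module.Basis.ext (pb f hf)
    intro k
    simp only [LinearMap.comp_apply, LinearMap.mulRight_apply, LinearMap.smul_apply,
      Module.Basis.coord_apply, smul_eq_mul]
    have hbk : (pb f hf) k = AdjoinRoot.root f ^ (k : ℕ) :=
      basis_pow f hf k
    rw [hbk]
    have h1 : AdjoinRoot.root f ^ (k : ℕ) * AdjoinRoot.mk f (HH f i)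
        = AdjoinRoot.mk f (X ^ (k : ℕ) * HH f i) := by
      rw [map_mul, map_pow, AdjoinRoot.mk_X]
    rw [h1, repr_mk_XpowHH f hf k i m hm, ← hbk, Module.Basis.repr_self, Finsupp.single_apply]
    split_ifs <;> simp_all
  have := congrArg (fun φ => φ z) key
  simpa [Module.Basis.coord_apply] using this

lemma hmapL1 (f : K[X]) (hf : f ≠ 0) :
    (f.map C).map (AdjoinRoot.mk f)
      = (X - C (AdjoinRoot.root f)) *
          ∑ t ∈ Finset.range f.natDegree, C (AdjoinRoot.mk f (HH f t)) * X ^ t := by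
  have h := congrArg (Polynomial.map (AdjoinRoot.mk f)) (L1 f)
  rw [Polynomial.map_sub, Polynomial.map_C, AdjoinRoot.mk_self, Polynomial.C_0, sub_zero,
    Polynomial.map_mul, Polynomial.map_sub, Polynomial.map_X, Polynomial.map_C,
    AdjoinRoot.mk_X, Polynomial.map_sum] at h
  rw [h]
  congr 1
  apply Finset.sum_congr rfl
  intro t _
  rw [Polynomial.map_mul, Polynomial.map_C, Polynomial.map_pow, Polynomial.map_X]

lemma mk_sum_c (f : K[X]) (g : Fin f.natDegree → K) :
    AdjoinRoot.mk f (∑ i : Fin f.natDegree, C (g i) * X ^ (i : ℕ))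
      = ∑ i : Fin f.natDegree, g i • AdjoinRoot.root f ^ (i : ℕ) := by
  rw [map_sum]
  apply Finset.sum_congr rfl
  intro t _
  rw [map_mul, map_pow, AdjoinRoot.mk_C, AdjoinRoot.mk_X, ← AdjoinRoot.algebraMap_eq,
    ← Algebra.smul_def]

/-- The Bezout relation reduced modulo `f(y)`. -/
lemma Ej (f : K[X]) (hf : f ≠ 0)
    (c : Fin f.natDegree → Fin f.natDegree → K)
    (hc : C f * (derivative f).map C - f.map C * C (derivative f)
        = (C X - X) * ∑ j : Fin f.natDegree,
            C (∑ i : Fin f.natDegree, C (c i j) * X ^ (i : ℕ)) * X ^ (j : ℕ))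
    (j : Fin f.natDegree) :
    AdjoinRoot.mk f (HH f j) * AdjoinRoot.mk f (derivative f)
      = ∑ i : Fin f.natDegree, c i j • AdjoinRoot.root f ^ (i : ℕ) := by
  have hmain := congrArg (Polynomial.map (AdjoinRoot.mk f)) hc
  rw [Polynomial.map_sub, Polynomial.map_mul, Polynomial.map_mul, Polynomial.map_C,
    AdjoinRoot.mk_self, Polynomial.C_0, zero_mul, zero_sub, Polynomial.map_C,
    Polynomial.map_mul, Polynomial.map_sub, Polynomial.map_C, Polynomial.map_X,
    AdjoinRoot.mk_X, Polynomial.map_sum, hmapL1 f hf] at hmain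
  have hterm : ∀ j' : Fin f.natDegree,
      Polynomial.map (AdjoinRoot.mk f)
        (C (∑ i : Fin f.natDegree, C (c i j') * X ^ (i : ℕ)) * X ^ (j' : ℕ))
      = C (AdjoinRoot.mk f (∑ i : Fin f.natDegree, C (c i j') * X ^ (i : ℕ)))
          * X ^ (j' : ℕ) := by
    intro j'
    rw [Polynomial.map_mul, Polynomial.map_C, Polynomial.map_pow, Polynomial.map_X]
  simp only [hterm] at hmain
  have h2 : (X - C (AdjoinRoot.root f)) *
        ((∑ t ∈ Finset.range f.natDegree, C (AdjoinRoot.mk f (HH f t)) * X ^ t) *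
          C (AdjoinRoot.mk f (derivative f)))
      = (X - C (AdjoinRoot.root f)) *
          ∑ j' : Fin f.natDegree,
            C (AdjoinRoot.mk f (∑ i : Fin f.natDegree, C (c i j') * X ^ (i : ℕ)))
              * X ^ (j' : ℕ) := by
    linear_combination -hmain
  have h3 := (monic_X_sub_C (AdjoinRoot.root f)).isRegular.left h2
  have h4 := congrArg (fun q => Polynomial.coeff q (j : ℕ)) h3
  have hS'C : (∑ t ∈ Finset.range f.natDegree, C (AdjoinRoot.mk f (HH f t)) * X ^ t) *
        C (AdjoinRoot.mk f (derivative f))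
      = ∑ t ∈ Finset.range f.natDegree,
          C (AdjoinRoot.mk f (HH f t) * AdjoinRoot.mk f (derivative f)) * X ^ t := by
    rw [Finset.sum_mul]
    apply Finset.sum_congr rfl
    intro t _
    rw [C_mul]
    ring
  rw [hS'C, coeff_sum_C, if_pos j.isLt, coeff_sum_fin] at h4
  rw [h4, mk_sum_c]

lemma repr_sum_smul {ι : Type*} [Fintype ι] [DecidableEq ι] {M : Type*} [AddCommGroup M]
    [Module K M] (b : Module.Basis ι K M) (g : ι → K) (i : ι) :
    b.repr (∑ t, g t • b t) i = g i := by
  rw [map_sum, Finsupp.finset_sum_apply]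
  simp only [map_smul, Finsupp.smul_apply, Module.Basis.repr_self, Finsupp.single_apply,
    smul_eq_mul, mul_ite, mul_one, mul_zero]
  rw [Finset.sum_ite_eq' Finset.univ i g]
  simp

lemma trace_eq (f : K[X]) (hf : f ≠ 0) (g : K[X]) :
    LinearMap.trace K (AdjoinRoot f) (LinearMap.mulLeft K (AdjoinRoot.mk f g))
      = ∑ k : Fin f.natDegree,
          (pb f hf).repr
            (AdjoinRoot.mk f (g * X ^ (k : ℕ))) k := by
  haveI := Module.Finite.of_basis
    (pb f hf)
  haveI := Module.Free.of_basis
    (pb f hf)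
  rw [LinearMap.trace_eq_matrix_trace K
    (pb f hf),
    Matrix.trace]
  apply Finset.sum_congr rfl
  intro k _
  rw [Matrix.diag_apply, LinearMap.toMatrix_apply, LinearMap.mulLeft_apply]
  have harg : AdjoinRoot.mk f g * AdjoinRoot.root f ^ (k : ℕ)
      = AdjoinRoot.mk f (g * X ^ (k : ℕ)) := by
    rw [map_mul, map_pow, AdjoinRoot.mk_X]
  rw [basis_pow f hf k, harg]

/-- The main identity: the Bezout coefficients equal the traces of products of
Horner basis elements. -/
lemma key (f : K[X]) (hf : f ≠ 0) (hd : 1 ≤ f.natDegree)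
    (c : Fin f.natDegree → Fin f.natDegree → K)
    (hc : C f * (derivative f).map C - f.map C * C (derivative f)
        = (C X - X) * ∑ j : Fin f.natDegree,
            C (∑ i : Fin f.natDegree, C (c i j) * X ^ (i : ℕ)) * X ^ (j : ℕ))
    (hlc : f.coeff f.natDegree ≠ 0) (i j : Fin f.natDegree) :
    c i j = LinearMap.trace K (AdjoinRoot f)
      (LinearMap.mulLeft K (AdjoinRoot.mk f (HH f i * HH f j))) := by
  have hm : ((⟨f.natDegree - 1, by omega⟩ : Fin f.natDegree) : ℕ) = f.natDegree - 1 := rfl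
  set m : Fin f.natDegree := ⟨f.natDegree - 1, by omega⟩
  have e1 : (pb f hf).repr
      (AdjoinRoot.mk f (HH f j) * AdjoinRoot.mk f (derivative f)) i = c i j := by
    rw [Ej f hf c hc j]
    have hsum : ∑ i' : Fin f.natDegree, c i' j • AdjoinRoot.root f ^ (i' : ℕ)
        = ∑ i' : Fin f.natDegree, c i' j •
            (pb f hf) i' := by
      apply Finset.sum_congr rfl
      intro t _
      rw [basis_pow f hf t]
    rw [hsum]
    exact repr_sum_smul _ _ i
  have e2 : f.coeff f.natDegree * c i j
      = (pb f hf).repr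
        (AdjoinRoot.mk f (HH f i * HH f j * derivative f)) m := by
    rw [← e1, ← dual f hf i m hm]
    refine congrArg (fun z => (pb f hf).repr z m) ?_
    rw [← map_mul, ← map_mul]
    exact congrArg _ (by ring)
  have hprod : HH f i * HH f j * derivative f
      = ∑ t ∈ Finset.range f.natDegree, HH f i * HH f j * X ^ t * HH f t := by
    rw [L3 f, Finset.mul_sum]
    apply Finset.sum_congr rfl
    intro t _
    ring
  have e3 : (pb f hf).repr
      (AdjoinRoot.mk f (HH f i * HH f j * derivative f)) m
      = ∑ k : Fin f.natDegree, f.coeff f.natDegree *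
          (pb f hf).repr
            (AdjoinRoot.mk f (HH f i * HH f j * X ^ (k : ℕ))) k := by
    rw [hprod, map_sum, map_sum, Finsupp.finset_sum_apply,
      ← Fin.sum_univ_eq_sum_range (fun t => ((pb f hf).repr
          (AdjoinRoot.mk f (HH f i * HH f j * X ^ t * HH f t))) m) f.natDegree]
    apply Finset.sum_congr rfl
    intro k _
    rw [map_mul, dual f hf k m hm]
  have e4 := trace_eq f hf (HH f i * HH f j)
  apply mul_left_cancel₀ hlc
  rw [e2, e3, e4, Finset.mul_sum]

end S17

/-- the Bezout matrix `B_{f,f'}` equals the matrix of traces of `f`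
with respect to the Horner basis. The identity
`f(x)f'(y) − f(y)f'(x) = (x−y)·Σ c_{ij} x^i y^j` is expressed in `K[x][y]`, where
the inner variable is `x` and the outer variable is `y`. -/
theorem statement17 {K : Type*} [Field K] {d : ℕ} (hd : 1 ≤ d)
    (f : Polynomial K) (hdeg : f.natDegree = d) (hlc : f.coeff d ≠ 0)
    (c : Fin d → Fin d → K)
    (hc : C f * (derivative f).map C - f.map C * C (derivative f)
        = (C X - X) *
          ∑ j : Fin d, C (∑ i : Fin d, C (c i j) * X ^ (i : ℕ)) * X ^ (j : ℕ))
    (H : Fin d → Polynomial K)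
    (hH : ∀ i : Fin d,
      H i = ∑ t ∈ Finset.range (d - (i : ℕ)),
        C (f.coeff ((i : ℕ) + 1 + t)) * X ^ t) :
    ∀ i j : Fin d,
      c i j
        = LinearMap.trace K (AdjoinRoot f)
            (LinearMap.mulLeft K (AdjoinRoot.mk f (H i * H j))) := by
  intro i j
  subst hdeg
  have hf : f ≠ 0 := by
    intro h
    exact hlc (by simp [h])
  have hHi : H i = S17.HH f i := hH i
  have hHj : H j = S17.HH f j := hH j
  rw [hHi, hHj]
  exact S17.key f hf hd c hc hlc i j
end
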